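/- Hölder inequality for sublinear expectations (underlying the norms ‖X‖_p = (Ê[|X|^p])^{1/p} used to construct the spaces L^p_G): Let E be a sublinear expectation on a type Ω and let p, q ∈ (1, ∞) with 1/p + 1/q = 1. Then for all X, Y : Ω → ℝ, E(fun ω => |X ω * Y ω|) ≤ (E(fun ω => |X ω|^p))^(1/p) * (E(fun ω => |Y ω|^q))^(1/q). -/

import Mathlib

/-- A sublinear expectation on a type `Ω`. -/
structure SublinearExpectation (Ω : Type*) where
  E : (Ω → ℝ) → ℝ
  mono : ∀ X Y : Ω → ℝ, (∀ ω, X ω ≤ Y ω) → E X ≤ E Y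
  const_preserving : ∀ c : ℝ, E (fun _ => c) = c
  subadd : ∀ X Y : Ω → ℝ, E (X + Y) ≤ E X + E Y
  pos_hom : ∀ (l : ℝ) (X : Ω → ℝ), 0 ≤ l → E (fun ω => l * X ω) = l * E X


/-- Hölder inequality for sublinear expectations. -/
theorem holder_sublinear {Ω : Type*} (𝔼 : SublinearExpectation Ω)
    (p q : ℝ) (hp : 1 < p) (hq : 1 < q) (hpq : 1 / p + 1 / q = 1)
    (X Y : Ω → ℝ) :
    𝔼.E (fun ω => |X ω * Y ω|) ≤
      (𝔼.E (fun ω => |X ω| ^ p)) ^ (1 / p) * (𝔼.E (fun ω => |Y ω| ^ q)) ^ (1 / q) := by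
  have hp0 : (0:ℝ) < p := lt_trans one_pos hp
  have hq0 : (0:ℝ) < q := lt_trans one_pos hq
  have hconj : p.HolderConjugate q := Real.holderConjugate_iff.mpr ⟨hp, by rw [← one_div, ← one_div]; exact hpq⟩
  set a := 𝔼.E (fun ω => |X ω| ^ p) with ha
  set b := 𝔼.E (fun ω => |Y ω| ^ q) with hb
  have hE0 : 𝔼.E (fun _ => (0:ℝ)) = 0 := 𝔼.const_preserving 0
  have hnn : ∀ Z : Ω → ℝ, (∀ ω, 0 ≤ Z ω) → 0 ≤ 𝔼.E Z := fun Z hZ => by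
    calc (0:ℝ) = 𝔼.E (fun _ => 0) := hE0.symm
    _ ≤ 𝔼.E Z := 𝔼.mono _ _ hZ
  have ha0 : 0 ≤ a := hnn _ fun ω => Real.rpow_nonneg (abs_nonneg _) _
  have hb0 : 0 ≤ b := hnn _ fun ω => Real.rpow_nonneg (abs_nonneg _) _
  set L := 𝔼.E (fun ω => |X ω * Y ω|) with hL
  have hL0 : 0 ≤ L := hnn _ fun ω => abs_nonneg _
  -- key parametric bound
  have key : ∀ t : ℝ, 0 < t →
      L ≤ (t ^ p / p) * a + (t ^ (-q) / q) * b := by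
    intro t ht
    have hpw : ∀ ω, |X ω * Y ω| ≤
        (t ^ p / p) * |X ω| ^ p + (t ^ (-q) / q) * |Y ω| ^ q := by
      intro ω
      have h1 := Real.young_inequality_of_nonneg
        (mul_nonneg ht.le (abs_nonneg (X ω)))
        (div_nonneg (abs_nonneg (Y ω)) ht.le) hconj
      have e1 : (t * |X ω|) ^ p = t ^ p * |X ω| ^ p :=
        Real.mul_rpow ht.le (abs_nonneg _)
      have e2 : (|Y ω| / t) ^ q = t ^ (-q) * |Y ω| ^ q := by
        rw [Real.div_rpow (abs_nonneg _) ht.le, Real.rpow_neg ht.le]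
        ring
      have e3 : t * |X ω| * (|Y ω| / t) = |X ω * Y ω| := by
        rw [abs_mul]; field_simp
      rw [e1, e2, e3] at h1
      calc |X ω * Y ω| ≤ t ^ p * |X ω| ^ p / p + t ^ (-q) * |Y ω| ^ q / q := h1
        _ = (t ^ p / p) * |X ω| ^ p + (t ^ (-q) / q) * |Y ω| ^ q := by ring
    calc L ≤ 𝔼.E ((fun ω => (t ^ p / p) * |X ω| ^ p) +
          (fun ω => (t ^ (-q) / q) * |Y ω| ^ q)) := 𝔼.mono _ _ hpw
      _ ≤ 𝔼.E (fun ω => (t ^ p / p) * |X ω| ^ p) +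
          𝔼.E (fun ω => (t ^ (-q) / q) * |Y ω| ^ q) := 𝔼.subadd _ _
      _ = (t ^ p / p) * a + (t ^ (-q) / q) * b := by
          rw [𝔼.pos_hom _ _ (by positivity), 𝔼.pos_hom _ _ (by positivity)]
  rcases eq_or_lt_of_le ha0 with ha' | ha'
  · -- a = 0
    have hrhs : a ^ (1/p) * b ^ (1/q) = 0 := by
      rw [← ha', Real.zero_rpow (by positivity), zero_mul]
    rw [hrhs]
    by_contra h
    push_neg at h
    -- h : 0 < L
    set t := (2 * (b + 1) / (q * L)) ^ (1/q) with ht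
    have hbase : 0 < 2 * (b + 1) / (q * L) := by positivity
    have htpos : 0 < t := Real.rpow_pos_of_pos hbase _
    have htq : t ^ (-q) = q * L / (2 * (b + 1)) := by
      rw [ht, ← Real.rpow_mul hbase.le]
      have hexp : 1 / q * (-q) = -1 := by field_simp
      rw [hexp, Real.rpow_neg_one, inv_div]
    have := key t htpos
    rw [← ha', mul_zero, zero_add, htq] at this
    have heq : q * L / (2 * (b + 1)) / q * b = L * b / (2 * (b + 1)) := by
      field_simp
    have hlt : L * b / (2 * (b + 1)) < L := by
      rw [div_lt_iff₀ (by positivity)]; nlinarith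
    rw [heq] at this
    linarith
  · -- a > 0
    rcases eq_or_lt_of_le hb0 with hb' | hb'
    · have hrhs : a ^ (1/p) * b ^ (1/q) = 0 := by
        rw [← hb', Real.zero_rpow (by positivity), mul_zero]
      rw [hrhs]
      by_contra h
      push_neg at h
      set t := (p * L / (2 * (a + 1))) ^ (1/p) with ht
      have hbase : 0 < p * L / (2 * (a + 1)) := by positivity
      have htpos : 0 < t := Real.rpow_pos_of_pos hbase _
      have htp : t ^ p = p * L / (2 * (a + 1)) := by
        rw [ht, ← Real.rpow_mul hbase.le, one_div_mul_cancel hp0.ne', Real.rpow_one]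
      have := key t htpos
      rw [← hb', mul_zero, add_zero, htp] at this
      have heq : p * L / (2 * (a + 1)) / p * a = L * a / (2 * (a + 1)) := by
        field_simp
      have hlt : L * a / (2 * (a + 1)) < L := by
        rw [div_lt_iff₀ (by positivity)]; nlinarith
      rw [heq] at this
      linarith
    · -- main case
      set t := (b / a) ^ (1 / (p * q)) with ht
      have hba : 0 < b / a := div_pos hb' ha'
      have htpos : 0 < t := Real.rpow_pos_of_pos hba _
      have htp : t ^ p * a = a ^ (1/p) * b ^ (1/q) := by
        rw [ht, ← Real.rpow_mul hba.le]
        have : 1 / (p * q) * p = 1 / q := by field_simp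
        rw [this, Real.div_rpow hb0 ha0]
        have haa : a ^ (1/p) * a ^ (1/q) = a := by
          rw [← Real.rpow_add ha', hpq, Real.rpow_one]
        rw [div_mul_eq_mul_div,
          div_eq_iff (Real.rpow_pos_of_pos ha' (1/q)).ne']
        linear_combination (-(b ^ (1/q))) * haa
      have htq : t ^ (-q) * b = a ^ (1/p) * b ^ (1/q) := by
        rw [ht, ← Real.rpow_mul hba.le]
        have : 1 / (p * q) * (-q) = -(1/p) := by field_simp
        rw [this, Real.rpow_neg hba.le, ← Real.inv_rpow hba.le, inv_div,
          Real.div_rpow ha0 hb0]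
        have hbb : b ^ (1/p) * b ^ (1/q) = b := by
          rw [← Real.rpow_add hb', hpq, Real.rpow_one]
        rw [div_mul_eq_mul_div,
          div_eq_iff (Real.rpow_pos_of_pos hb' (1/p)).ne']
        linear_combination (-(a ^ (1/p))) * hbb
      have := key t htpos
      calc L ≤ (t ^ p / p) * a + (t ^ (-q) / q) * b := this
        _ = (1/p) * (t ^ p * a) + (1/q) * (t ^ (-q) * b) := by ring
        _ = (1/p + 1/q) * (a ^ (1/p) * b ^ (1/q)) := by rw [htp, htq]; ring
        _ = a ^ (1/p) * b ^ (1/q) := by rw [hpq, one_mul]
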